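/- In the banknote-contract transition system, from any reachable state in which claim = some (pid, t₀), exactly one of the transitions ChallengeClaim or ClaimUnchallenged can fire before any further BanknoteLost transition, and after it fires claim = none; consequently, along any execution, claims alternate: between any two BanknoteLost transitions there is exactly one claim-resolving transition. -/

import Mathlib

/-- A state of the banknote-contract:
serial number, active lost-banknote claim (party id and time), coins currently held
by the contract, coins released so far, and total coins deposited so far. -/
structure BState where
  serial : Option String
  claim : Option (ℕ × ℕ)
  contractCoins : ℕ
  released : ℕ
  deposited : ℕ

/-- Labels of the transitions of the banknote-contract. -/
inductive BLabel
  | banknoteLost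
  | challengeClaim
  | claimUnchallenged
  | recoverCoins

/-- The labeled transition relation of the banknote-contract `φ_$`, with parameters
`d₀` (deposit required for a lost-banknote claim) and `tTr` (the time after which an
unchallenged claim can be settled). -/
inductive BStep (d₀ tTr : ℕ) : BLabel → BState → BState → Prop
  | banknoteLost (s : BState) (pid t : ℕ) (h : s.claim = none) :
      BStep d₀ tTr .banknoteLost s
        { s with claim := some (pid, t),
                 contractCoins := s.contractCoins + d₀,
                 deposited := s.deposited + d₀ }
  | challengeClaim (s : BState) (s' : Option String) (h : s.claim ≠ none)
      (hc : d₀ ≤ s.contractCoins) :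
      BStep d₀ tTr .challengeClaim s
        { s with serial := s', claim := none,
                 contractCoins := s.contractCoins - d₀,
                 released := s.released + d₀ }
  | claimUnchallenged (s : BState) (pid t₀ t : ℕ) (s' : Option String)
      (h : s.claim = some (pid, t₀)) (ht : t₀ + tTr < t) (hc : d₀ ≤ s.contractCoins) :
      BStep d₀ tTr .claimUnchallenged s
        { s with serial := s', claim := none,
                 contractCoins := s.contractCoins - d₀,
                 released := s.released + d₀ }
  | recoverCoins (s : BState) (h : s.claim = none) :
      BStep d₀ tTr .recoverCoins s
        { s with serial := none,
                 released := s.released + s.contractCoins,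
                 contractCoins := 0 }

/-- Reachability from an initial state by finitely many transitions. -/
inductive BReachable (d₀ tTr : ℕ) (init : BState) : BState → Prop
  | refl : BReachable d₀ tTr init init
  | step {s s' : BState} {l : BLabel} :
      BReachable d₀ tTr init s → BStep d₀ tTr l s s' → BReachable d₀ tTr init s'


lemma bstep_none_keep {d₀ tTr : ℕ} {l : BLabel} {s s' : BState}
    (h : BStep d₀ tTr l s s') (hl : l ≠ .banknoteLost) (hn : s.claim = none) :
    s'.claim = none := by
  cases h with
  | banknoteLost => exact absurd rfl hl
  | challengeClaim => rfl
  | claimUnchallenged => rfl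
  | recoverCoins => exact hn

lemma bstep_resolve {d₀ tTr : ℕ} {l : BLabel} {s s' : BState}
    (h : BStep d₀ tTr l s s') (hs : s.claim ≠ none) :
    (l = .challengeClaim ∨ l = .claimUnchallenged) ∧ s'.claim = none := by
  cases h with
  | banknoteLost _ _ _ h => exact absurd h hs
  | challengeClaim => exact ⟨Or.inl rfl, rfl⟩
  | claimUnchallenged => exact ⟨Or.inr rfl, rfl⟩
  | recoverCoins _ h => exact absurd h hs

lemma bstep_resolve_needs {d₀ tTr : ℕ} {l : BLabel} {s s' : BState}
    (h : BStep d₀ tTr l s s')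
    (hl : l = .challengeClaim ∨ l = .claimUnchallenged) : s.claim ≠ none := by
  cases h with
  | banknoteLost => simp at hl
  | recoverCoins => simp at hl
  | challengeClaim _ _ h => exact h
  | claimUnchallenged _ _ _ _ _ h => simp [h]

lemma bstep_lost {d₀ tTr : ℕ} {s s' : BState}
    (h : BStep d₀ tTr .banknoteLost s s') : s.claim = none ∧ s'.claim ≠ none := by
  cases h with
  | banknoteLost => exact ⟨‹_›, by simp⟩

/-- Claims alternate in the banknote-contract. First part: from any reachable state in
which there is an active claim, neither `BanknoteLost` nor `RecoverCoins` can fire; any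
transition that fires is `ChallengeClaim` or `ClaimUnchallenged` and afterwards
`claim = none`. Second part: along any finite execution from the initial state, between
any two `BanknoteLost` transitions (with no `BanknoteLost` strictly in between) there
is exactly one claim-resolving transition. -/
theorem banknoteContract_claims_alternate (d₀ tTr : ℕ) (s₀ : String) (d : ℕ) :
    (∀ st : BState, BReachable d₀ tTr ⟨some s₀, none, d, 0, d⟩ st →
      ∀ c : ℕ × ℕ, st.claim = some c →
        (¬ ∃ st', BStep d₀ tTr .banknoteLost st st') ∧
        (¬ ∃ st', BStep d₀ tTr .recoverCoins st st') ∧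
        (∀ (l : BLabel) (st' : BState), BStep d₀ tTr l st st' →
          (l = .challengeClaim ∨ l = .claimUnchallenged) ∧ st'.claim = none)) ∧
    (∀ (n : ℕ) (σ : ℕ → BState) (ℓ : ℕ → BLabel),
      σ 0 = (⟨some s₀, none, d, 0, d⟩ : BState) →
      (∀ i < n, BStep d₀ tTr (ℓ i) (σ i) (σ (i + 1))) →
      ∀ i j, i < j → j < n → ℓ i = .banknoteLost → ℓ j = .banknoteLost →
        (∀ m, i < m → m < j → ℓ m ≠ .banknoteLost) →
        ∃! m : ℕ, i < m ∧ m < j ∧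
          (ℓ m = .challengeClaim ∨ ℓ m = .claimUnchallenged)) := by
  constructor
  · intro st _ c hc
    refine ⟨?_, ?_, ?_⟩
    · rintro ⟨st', h⟩
      cases h with
      | banknoteLost _ _ _ h => rw [hc] at h; exact Option.some_ne_none c h
    · rintro ⟨st', h⟩
      cases h with
      | recoverCoins _ h => rw [hc] at h; exact Option.some_ne_none c h
    · intro l st' h
      exact bstep_resolve h (by simp [hc])
  · intro n σ ℓ h0 hstep i j hij hjn hi hj hno
    have hjnone : (σ j).claim = none := by
      have := hstep j hjn
      rw [hj] at this
      exact (bstep_lost this).1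
    have hisome : (σ (i+1)).claim ≠ none := by
      have := hstep i (lt_trans hij hjn)
      rw [hi] at this
      exact (bstep_lost this).2
    -- preservation of claim = none on (i, j]
    have keep : ∀ k, k ≤ j → ∀ b, i < b → b ≤ k → (σ b).claim = none → (σ k).claim = none := by
      intro k
      induction k with
      | zero => intro _ b hb hb0 _; omega
      | succ k ih =>
        intro hkj b hb hbk hnone
        rcases Nat.eq_or_lt_of_le hbk with h | h
        · rw [← h]; exact hnone
        · have hk := ih (by omega) b hb (by omega) hnone
          exact bstep_none_keep (hstep k (by omega)) (hno k (by omega) (by omega)) hk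
    have hP : ∃ m, i < m ∧ m ≤ j ∧ (σ m).claim = none := ⟨j, hij, le_refl j, hjnone⟩
    classical
    set m₀ := Nat.find hP with hm₀
    obtain ⟨hm₀i, hm₀j, hm₀none⟩ := Nat.find_spec hP
    rw [← hm₀] at hm₀i hm₀j hm₀none
    have hm₀2 : i + 1 < m₀ := by
      rcases Nat.lt_or_ge (i+1) m₀ with h | h
      · exact h
      · exfalso
        have : m₀ = i + 1 := by omega
        rw [this] at hm₀none
        exact hisome hm₀none
    set m := m₀ - 1 with hm
    have hmi : i < m := by omega
    have hmj : m < j := by omega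
    have hmsome : (σ m).claim ≠ none := by
      intro hnone
      exact Nat.find_min hP (by omega : m < m₀) ⟨hmi, by omega, hnone⟩
    have hstepm := hstep m (by omega)
    obtain ⟨hres, _⟩ := bstep_resolve hstepm hmsome
    -- at most one resolving step
    have atmost : ∀ a b, i < a → a < b → b < j →
        (ℓ a = .challengeClaim ∨ ℓ a = .claimUnchallenged) →
        (ℓ b = .challengeClaim ∨ ℓ b = .claimUnchallenged) → False := by
      intro a b ha hab hbj hra hrb
      have hsa := hstep a (by omega)
      have hnone1 : (σ (a+1)).claim = none := (bstep_resolve hsa (bstep_resolve_needs hsa hra)).2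
      have hbnone : (σ b).claim = none := keep b (by omega) (a+1) (by omega) (by omega) hnone1
      have hsb := hstep b (by omega)
      exact bstep_resolve_needs hsb hrb hbnone
    refine ⟨m, ⟨hmi, hmj, hres⟩, ?_⟩
    intro m' ⟨hm'i, hm'j, hres'⟩
    rcases lt_trichotomy m' m with h | h | h
    · exact absurd (atmost m' m hm'i h hmj hres' hres) (not_false)
    · exact h
    · exact absurd (atmost m m' hmi h hm'j hres hres') (not_false)
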